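/- arXiv:1508.07713 — 2 statements merged into one kernel-verified Lean document; each statement's English description precedes it below -/
import Mathlib

section
/- Let G be a triangle-free graph in W₂ with α(G) ≥ 2. Then for every edge ab of G, the graph G_{ab} = G \ (N_G(a) ∪ N_G(b)) satisfies α(G_{ab}) = α(G) − 1. -/
open Finset

section EdgeIdealPaper

variable {V : Type*} [Fintype V] [DecidableEq V]

/-- `S` is an independent set of vertices in `G`. -/
def IsIndep (G : SimpleGraph V) (S : Finset V) : Prop :=
  ∀ u ∈ S, ∀ v ∈ S, ¬ G.Adj u v

/-- `S` is a maximal independent set of the induced subgraph of `G` on `A`. -/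
def IsMaxIndepIn (G : SimpleGraph V) (A S : Finset V) : Prop :=
  S ⊆ A ∧ IsIndep G S ∧ ∀ v ∈ A, v ∉ S → ¬ IsIndep G (insert v S)

open scoped Classical in
/-- The independence number of the induced subgraph of `G` on `A`. -/
noncomputable def alphaIn (G : SimpleGraph V) (A : Finset V) : ℕ :=
  ((A.powerset).filter (fun S => IsIndep G S)).sup Finset.card

/-- The induced subgraph of `G` on `A` is well-covered. -/
def WellCoveredIn (G : SimpleGraph V) (A : Finset V) : Prop :=
  ∀ S, IsMaxIndepIn G A S → S.card = alphaIn G A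

/-- The induced subgraph of `G` on `A` is in the class `W₂`. -/
def W2In (G : SimpleGraph V) (A : Finset V) : Prop :=
  WellCoveredIn G A ∧
    ∀ x ∈ A, WellCoveredIn G (A.erase x) ∧ alphaIn G (A.erase x) = alphaIn G A

open scoped Classical in
/-- The neighborhood of a vertex `a` in `G`, as a `Finset`. -/
noncomputable def nbr (G : SimpleGraph V) (a : V) : Finset V :=
  univ.filter (fun v => G.Adj a v)

open scoped Classical in
/-- The neighborhood `N_G(S)` of a set `S` of vertices: vertices outside `S`
adjacent to some vertex of `S`. -/
noncomputable def nbrSet (G : SimpleGraph V) (S : Finset V) : Finset V :=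
  univ.filter (fun v => v ∉ S ∧ ∃ u ∈ S, G.Adj u v)

/-- The vertex set of the localization `G_S = G \ (S ∪ N_G(S))`. -/
noncomputable def loc (G : SimpleGraph V) (S : Finset V) : Finset V :=
  univ \ (S ∪ nbrSet G S)

/-- The vertex set of `G_{ab} = G \ (N_G(a) ∪ N_G(b))`. -/
noncomputable def locE (G : SimpleGraph V) (a b : V) : Finset V :=
  univ \ (nbr G a ∪ nbr G b)

/-- The induced subgraph of `G` on `A` has no isolated vertices. -/
def NoIsolatedIn (G : SimpleGraph V) (A : Finset V) : Prop :=
  ∀ v ∈ A, ∃ u ∈ A, G.Adj v u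

open scoped Classical in
/-- The reduced Euler characteristic `∑_{F} (-1)^{|F|-1}` (the empty face
contributing `-1`) of the independence complex of the induced subgraph of `G` on `A`. -/
noncomputable def indEuler (G : SimpleGraph V) (A : Finset V) : ℤ :=
  -∑ S ∈ (A.powerset).filter (fun S => IsIndep G S), (-1 : ℤ) ^ S.card

end EdgeIdealPaper

section EdgeIdealPaper

variable {V : Type*} [Fintype V] [DecidableEq V]

section AuxLemmas

variable {V : Type*} [Fintype V] [DecidableEq V]

private lemma isIndep_subset' {G : SimpleGraph V} {S T : Finset V} (h : S ⊆ T)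
    (hT : IsIndep G T) : IsIndep G S := fun u hu v hv => hT u (h hu) v (h hv)

private lemma isIndep_insert' {G : SimpleGraph V} {S : Finset V} {a : V}
    (hS : IsIndep G S) (h : ∀ s ∈ S, ¬ G.Adj a s) :
    IsIndep G (insert a S) := by
  intro u hu v hv
  simp only [Finset.mem_insert] at hu hv
  rcases hu with rfl | hu <;> rcases hv with rfl | hv
  · simp
  · exact h v hv
  · intro hadj; exact h u hu hadj.symm
  · exact hS u hu v hv

private lemma card_le_alphaIn' {G : SimpleGraph V} {A S : Finset V} (hSA : S ⊆ A)
    (hS : IsIndep G S) : S.card ≤ alphaIn G A := by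
  classical
  unfold alphaIn
  exact Finset.le_sup (Finset.mem_filter.mpr ⟨Finset.mem_powerset.mpr hSA, hS⟩)

private lemma alphaIn_le' {G : SimpleGraph V} {A : Finset V} {m : ℕ}
    (h : ∀ S ⊆ A, IsIndep G S → S.card ≤ m) : alphaIn G A ≤ m := by
  classical
  unfold alphaIn
  apply Finset.sup_le
  intro S hS
  rw [Finset.mem_filter, Finset.mem_powerset] at hS
  exact h S hS.1 hS.2

private lemma exists_maximal_extension' (G : SimpleGraph V) {A S : Finset V}
    (hSA : S ⊆ A) (hS : IsIndep G S) :
    ∃ T, S ⊆ T ∧ IsMaxIndepIn G A T := by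
  classical
  obtain ⟨T, hTmem, hTmax⟩ := Finset.exists_max_image
      ((A.powerset).filter (fun T => IsIndep G T ∧ S ⊆ T)) Finset.card
      ⟨S, Finset.mem_filter.mpr ⟨Finset.mem_powerset.mpr hSA, hS, Finset.Subset.refl S⟩⟩
  simp only [Finset.mem_filter, Finset.mem_powerset] at hTmem
  refine ⟨T, hTmem.2.2, hTmem.1, hTmem.2.1, ?_⟩
  intro v hvA hvT hcon
  have hmem : insert v T ∈ (A.powerset).filter (fun T => IsIndep G T ∧ S ⊆ T) := by
    simp only [Finset.mem_filter, Finset.mem_powerset]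
    exact ⟨Finset.insert_subset hvA hTmem.1, hcon,
      hTmem.2.2.trans (Finset.subset_insert _ _)⟩
  have := hTmax _ hmem
  rw [Finset.card_insert_of_notMem hvT] at this
  omega

/-- Key descent lemma: there is a maximum independent set `M` with `a ∈ M` whose
intersection with `N(b)` is contained in `{a}`. -/
private lemma key_lemma (G : SimpleGraph V) (htf : G.CliqueFree 3)
    (hw2 : W2In G Finset.univ) (a b : V) (hab : G.Adj a b) :
    ∀ n : ℕ, ∀ M : Finset V, IsIndep G M → M.card = alphaIn G Finset.univ → a ∈ M →
      (M ∩ nbr G b).card ≤ n →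
      ∃ T, IsIndep G T ∧ T.card = alphaIn G Finset.univ ∧ a ∈ T ∧ T ∩ nbr G b ⊆ {a} := by
  classical
  intro n
  induction n with
  | zero =>
    intro M hM hcard haM hn
    exfalso
    have haNb : a ∈ nbr G b := by
      unfold nbr; exact Finset.mem_filter.mpr ⟨Finset.mem_univ a, hab.symm⟩
    have : a ∈ M ∩ nbr G b := Finset.mem_inter.mpr ⟨haM, haNb⟩
    have := Finset.card_pos.mpr ⟨a, this⟩
    omega
  | succ n ih =>
    intro M hM hcard haM hn
    by_cases hsub : M ∩ nbr G b ⊆ {a}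
    · exact ⟨M, hM, hcard, haM, hsub⟩
    · -- pick c ∈ M ∩ N(b), c ≠ a
      obtain ⟨c, hcmem, hcne⟩ : ∃ c ∈ M ∩ nbr G b, c ≠ a := by
        by_contra hcon
        push_neg at hcon
        exact hsub (fun x hx => Finset.mem_singleton.mpr (hcon x hx))
      obtain ⟨hcM, hcNb⟩ := Finset.mem_inter.mp hcmem
      have hbc : G.Adj b c := by
        unfold nbr at hcNb
        exact (Finset.mem_filter.mp hcNb).2
      -- work in A = univ.erase c
      obtain ⟨hwcA, halphaA⟩ := hw2.2 c (Finset.mem_univ c)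
      have herase_sub : M.erase c ⊆ Finset.univ.erase c :=
        Finset.erase_subset_erase c (Finset.subset_univ M)
      have hMe_indep : IsIndep G (M.erase c) :=
        isIndep_subset' (Finset.erase_subset c M) hM
      obtain ⟨M₁, hM₁sup, hM₁max⟩ := exists_maximal_extension' G herase_sub hMe_indep
      have hM₁card : M₁.card = alphaIn G Finset.univ := by
        rw [hwcA M₁ hM₁max]; exact halphaA
      have hM₁sub : M₁ ⊆ Finset.univ.erase c := hM₁max.1
      have hM₁indep : IsIndep G M₁ := hM₁max.2.1
      -- M₁ \ (M.erase c) is a singleton {d}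
      have hcardMe : (M.erase c).card = M.card - 1 := Finset.card_erase_of_mem hcM
      have hMpos : 1 ≤ M.card := Finset.card_pos.mpr ⟨a, haM⟩
      have hsd : (M₁ \ M.erase c).card = 1 := by
        rw [Finset.card_sdiff_of_subset hM₁sup]
        omega
      obtain ⟨d, hd⟩ := Finset.card_eq_one.mp hsd
      have hdM₁ : d ∈ M₁ := by
        have : d ∈ M₁ \ M.erase c := hd ▸ Finset.mem_singleton_self d
        exact (Finset.mem_sdiff.mp this).1
      have hdnotMe : d ∉ M.erase c := by
        have : d ∈ M₁ \ M.erase c := hd ▸ Finset.mem_singleton_self d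
        exact (Finset.mem_sdiff.mp this).2
      have hdc : d ≠ c := Finset.ne_of_mem_erase (hM₁sub hdM₁)
      have hdM : d ∉ M := fun h => hdnotMe (Finset.mem_erase.mpr ⟨hdc, h⟩)
      have hM₁eq : M₁ = insert d (M.erase c) := by
        have h1 : M₁ \ M.erase c ∪ M.erase c = M₁ := Finset.sdiff_union_of_subset hM₁sup
        rw [← h1, hd, Finset.insert_eq]
      -- d must be adjacent to c
      have hnotind : ¬ IsIndep G (insert d M) := by
        intro hind
        have := card_le_alphaIn' (Finset.subset_univ (insert d M)) hind
        rw [Finset.card_insert_of_notMem hdM] at this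
        omega
      have hdadjc : G.Adj d c := by
        by_contra hdc_adj
        apply hnotind
        apply isIndep_insert' hM
        intro s hsM hadj
        by_cases hsc : s = c
        · exact hdc_adj (hsc ▸ hadj)
        · have hsMe : s ∈ M.erase c := Finset.mem_erase.mpr ⟨hsc, hsM⟩
          have : s ∈ M₁ := hM₁sup hsMe
          exact hM₁indep d hdM₁ s this hadj
      -- triangle-freeness: d ∉ N(b)
      have hdNb : d ∉ nbr G b := by
        intro hdNb
        have hbd : G.Adj b d := by
          unfold nbr at hdNb
          exact (Finset.mem_filter.mp hdNb).2
        exact htf {b, c, d} (SimpleGraph.is3Clique_triple_iff.mpr ⟨hbc, hbd, hdadjc.symm⟩)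
      -- apply induction hypothesis to M₁
      have haMe : a ∈ M.erase c := Finset.mem_erase.mpr ⟨fun h => hcne h.symm, haM⟩
      have hinter : M₁ ∩ nbr G b = (M ∩ nbr G b).erase c := by
        rw [hM₁eq]
        ext x
        simp only [Finset.mem_inter, Finset.mem_insert, Finset.mem_erase]
        constructor
        · rintro ⟨rfl | hx, hxb⟩
          · exact absurd hxb hdNb
          · exact ⟨hx.1, hx.2, hxb⟩
        · rintro ⟨hxc, hxM, hxb⟩
          exact ⟨Or.inr ⟨hxc, hxM⟩, hxb⟩
      have hcardle : (M₁ ∩ nbr G b).card ≤ n := by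
        rw [hinter, Finset.card_erase_of_mem hcmem]
        omega
      exact ih M₁ hM₁indep hM₁card (hM₁sup haMe) hcardle

end AuxLemmas

/-- For a triangle-free graph in `W₂` with `α(G) ≥ 2` and every edge `ab`,
`α(G_{ab}) = α(G) - 1`. -/
theorem stmt4 (G : SimpleGraph V) (htf : G.CliqueFree 3)
    (hw2 : W2In G Finset.univ) (hα : 2 ≤ alphaIn G Finset.univ)
    (a b : V) (hab : G.Adj a b) :
    alphaIn G (locE G a b) = alphaIn G Finset.univ - 1 := by
  classical
  have haNb : a ∈ nbr G b := by
    unfold nbr; exact Finset.mem_filter.mpr ⟨Finset.mem_univ a, hab.symm⟩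
  have haLoc : a ∉ locE G a b := by
    unfold locE
    intro h
    exact (Finset.mem_sdiff.mp h).2 (Finset.mem_union_right _ haNb)
  -- upper bound
  have hub : alphaIn G (locE G a b) ≤ alphaIn G Finset.univ - 1 := by
    apply alphaIn_le'
    intro S hSsub hSind
    have haS : a ∉ S := fun h => haLoc (hSsub h)
    have hins : IsIndep G (insert a S) := by
      apply isIndep_insert' hSind
      intro s hsS hadj
      have := hSsub hsS
      unfold locE at this
      exact (Finset.mem_sdiff.mp this).2 (Finset.mem_union_left _
        (Finset.mem_filter.mpr ⟨Finset.mem_univ s, hadj⟩))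
    have := card_le_alphaIn' (Finset.subset_univ (insert a S)) hins
    rw [Finset.card_insert_of_notMem haS] at this
    omega
  -- lower bound: build a maximum independent set through a, then use the key lemma
  obtain ⟨M₀, hM₀sup, hM₀max⟩ := exists_maximal_extension' G
    (Finset.subset_univ {a}) (by intro u hu v hv; simp_all [G.irrefl])
  have hM₀card : M₀.card = alphaIn G Finset.univ := hw2.1 M₀ hM₀max
  obtain ⟨T, hTind, hTcard, haT, hTsub⟩ := key_lemma G htf hw2 a b hab
    (M₀ ∩ nbr G b).card M₀ hM₀max.2.1 hM₀card
    (hM₀sup (Finset.mem_singleton_self a)) le_rfl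
  have hlb : alphaIn G Finset.univ - 1 ≤ alphaIn G (locE G a b) := by
    have hsubLoc : T.erase a ⊆ locE G a b := by
      intro v hv
      obtain ⟨hva, hvT⟩ := Finset.mem_erase.mp hv
      unfold locE
      rw [Finset.mem_sdiff]
      refine ⟨Finset.mem_univ v, ?_⟩
      intro hmem
      rcases Finset.mem_union.mp hmem with h | h
      · have hadj : G.Adj a v := by
          unfold nbr at h; exact (Finset.mem_filter.mp h).2
        exact hTind a haT v hvT hadj
      · have : v ∈ T ∩ nbr G b := Finset.mem_inter.mpr ⟨hvT, h⟩
        exact hva (Finset.mem_singleton.mp (hTsub this))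
    have hind : IsIndep G (T.erase a) := isIndep_subset' (Finset.erase_subset a T) hTind
    have := card_le_alphaIn' hsubLoc hind
    rw [Finset.card_erase_of_mem haT, hTcard] at this
    exact this
  omega

end EdgeIdealPaper
end

section
/- If G is a triangle-free graph in W₂, then the independence complex Δ(G) is Eulerian; that is, Δ(G) is pure and for every face F (including the empty face), the reduced Euler characteristic of the link of F in Δ(G) equals (−1)^{dim lk F}. -/
open Finset

section EIPAux
set_option linter.unusedSectionVars false

variable {V : Type*} [Fintype V] [DecidableEq V]

lemma eip_indep_mono {G : SimpleGraph V} {S T : Finset V} (h : IsIndep G S) (hTS : T ⊆ S) :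
    IsIndep G T := fun u hu v hv => h u (hTS hu) v (hTS hv)

lemma eip_indep_empty (G : SimpleGraph V) : IsIndep G (∅ : Finset V) := by
  intro u hu; simp at hu

open scoped Classical in
/-- The vertex set of `A` minus the closed neighborhood of `a`. -/
noncomputable def eipLocv (G : SimpleGraph V) (A : Finset V) (a : V) : Finset V :=
  A.filter (fun v => ¬ G.Adj a v ∧ v ≠ a)

lemma eip_mem_locv {G : SimpleGraph V} {A : Finset V} {a v : V} :
    v ∈ eipLocv G A a ↔ v ∈ A ∧ ¬ G.Adj a v ∧ v ≠ a := by
  classical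
  simp [eipLocv]

lemma eip_indep_insert {G : SimpleGraph V} {S : Finset V} {a : V} (hind : IsIndep G S)
    (hall : ∀ v ∈ S, ¬ G.Adj a v) : IsIndep G (insert a S) := by
  intro u hu v hv hadj
  rcases Finset.mem_insert.mp hu with h1 | h1 <;> rcases Finset.mem_insert.mp hv with h2 | h2
  · exact G.irrefl (h1 ▸ h2 ▸ hadj)
  · exact hall v h2 (h1 ▸ hadj)
  · exact hall u h1 (h2 ▸ hadj).symm
  · exact hind u h1 v h2 hadj

/-- Pick an element of a nonempty finset. -/
noncomputable def eipPick {s : Finset V} (h : s.Nonempty) : V := Exists.choose h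

lemma eipPick_mem {s : Finset V} (h : s.Nonempty) : eipPick h ∈ s := Exists.choose_spec h

lemma eipPick_congr {s t : Finset V} (hst : s = t) (hs : s.Nonempty) (ht : t.Nonempty) :
    eipPick hs = eipPick ht := by subst hst; rfl

open scoped Classical in
/-- The sum `∑ (-1)^|S|` over independent subsets of `A`. -/
noncomputable def eipE (G : SimpleGraph V) (A : Finset V) : ℤ :=
  ∑ S ∈ (A.powerset).filter (fun S => IsIndep G S), (-1 : ℤ) ^ S.card

lemma eip_indEuler (G : SimpleGraph V) (A : Finset V) : indEuler G A = - eipE G A := rfl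

lemma eip_exists_max {G : SimpleGraph V} {A : Finset V} :
    ∀ (n : ℕ) (S : Finset V), A.card - S.card ≤ n → S ⊆ A → IsIndep G S →
      ∃ T, S ⊆ T ∧ IsMaxIndepIn G A T := by
  intro n
  induction n with
  | zero =>
    intro S hn hSA hind
    have hcard : A.card ≤ S.card := by omega
    have hAS : S = A := Finset.eq_of_subset_of_card_le hSA hcard
    exact ⟨S, subset_rfl, hSA, hind, fun v hv hvS _ => hvS (by rw [hAS]; exact hv)⟩
  | succ n ih =>
    intro S hn hSA hind
    by_cases h : ∃ v ∈ A, v ∉ S ∧ IsIndep G (insert v S)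
    · obtain ⟨v, hvA, hvS, hvind⟩ := h
      have hcard : (insert v S).card = S.card + 1 := Finset.card_insert_of_notMem hvS
      have hsub : insert v S ⊆ A := Finset.insert_subset hvA hSA
      have hle : (insert v S).card ≤ A.card := Finset.card_le_card hsub
      obtain ⟨T, hST, hT⟩ := ih (insert v S) (by omega) hsub hvind
      exact ⟨T, (Finset.subset_insert v S).trans hST, hT⟩
    · push_neg at h
      exact ⟨S, subset_rfl, hSA, hind, fun v hv hvS => h v hv hvS⟩

lemma eip_card_le_alpha {G : SimpleGraph V} {A S : Finset V} (hSA : S ⊆ A) (hind : IsIndep G S) :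
    S.card ≤ alphaIn G A := by
  classical
  unfold alphaIn
  exact Finset.le_sup (by rw [Finset.mem_filter, Finset.mem_powerset]; exact ⟨hSA, hind⟩)

lemma eip_alpha_exists (G : SimpleGraph V) (A : Finset V) :
    ∃ S, S ⊆ A ∧ IsIndep G S ∧ S.card = alphaIn G A := by
  classical
  unfold alphaIn
  have hne : ((A.powerset).filter (fun S => IsIndep G S)).Nonempty :=
    ⟨∅, by
      rw [Finset.mem_filter, Finset.mem_powerset]
      exact ⟨Finset.empty_subset _, eip_indep_empty G⟩⟩
  obtain ⟨S, hS, hEq⟩ := Finset.exists_mem_eq_sup _ hne Finset.card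
  rw [Finset.mem_filter, Finset.mem_powerset] at hS
  exact ⟨S, hS.1, hS.2, hEq.symm⟩

lemma eip_max_insert {G : SimpleGraph V} {C S : Finset V} {a : V} (haC : a ∈ C)
    (hS : IsMaxIndepIn G (eipLocv G C a) S) : IsMaxIndepIn G C (insert a S) := by
  obtain ⟨hsub, hind, hmax⟩ := hS
  have hmemS : ∀ v ∈ S, v ∈ C ∧ ¬ G.Adj a v ∧ v ≠ a := fun v hv => eip_mem_locv.mp (hsub hv)
  refine ⟨?_, ?_, ?_⟩
  · intro v hv
    rcases Finset.mem_insert.mp hv with rfl | hv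
    · exact haC
    · exact (hmemS v hv).1
  · exact eip_indep_insert hind (fun v hv => (hmemS v hv).2.1)
  · intro v hvC hvS hcon
    by_cases hadj : G.Adj a v
    · exact hcon v (Finset.mem_insert_self v _)
        a (Finset.mem_insert_of_mem (Finset.mem_insert_self a S)) hadj.symm
    · have hva : v ≠ a := fun h => hvS (h ▸ Finset.mem_insert_self a S)
      have hvD : v ∈ eipLocv G C a := eip_mem_locv.mpr ⟨hvC, hadj, hva⟩
      have hvS' : v ∉ S := fun h => hvS (Finset.mem_insert_of_mem h)
      exact hmax v hvD hvS'
        (eip_indep_mono hcon (Finset.insert_subset_insert _ (Finset.subset_insert a S)))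

lemma eip_wc_locv {G : SimpleGraph V} {C : Finset V} {a : V} (hwc : WellCoveredIn G C)
    (haC : a ∈ C) :
    WellCoveredIn G (eipLocv G C a) ∧ alphaIn G (eipLocv G C a) + 1 = alphaIn G C := by
  have hmaxcard : ∀ S, IsMaxIndepIn G (eipLocv G C a) S → S.card + 1 = alphaIn G C := by
    intro S hS
    have h2 := hwc _ (eip_max_insert haC hS)
    have haS : a ∉ S := fun h => (eip_mem_locv.mp (hS.1 h)).2.2 rfl
    rw [Finset.card_insert_of_notMem haS] at h2
    omega
  have halpha : alphaIn G (eipLocv G C a) + 1 = alphaIn G C := by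
    obtain ⟨T0, _, hT0⟩ := eip_exists_max (G := G) (A := eipLocv G C a) (eipLocv G C a).card ∅
      (Nat.sub_le _ _) (Finset.empty_subset _) (eip_indep_empty G)
    obtain ⟨S, hSD, hSind, hScard⟩ := eip_alpha_exists G (eipLocv G C a)
    obtain ⟨T, hST, hT⟩ := eip_exists_max (G := G) (A := eipLocv G C a) (eipLocv G C a).card S
      (Nat.sub_le _ _) hSD hSind
    have h1 : S.card ≤ T.card := Finset.card_le_card hST
    have h2 := hmaxcard T hT
    have h3 := hmaxcard T0 hT0
    have h5 : T0.card ≤ alphaIn G (eipLocv G C a) := eip_card_le_alpha hT0.1 hT0.2.1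
    omega
  exact ⟨fun S hS => by have := hmaxcard S hS; omega, halpha⟩

lemma eip_locv_erase (G : SimpleGraph V) (A : Finset V) (a y : V) :
    (eipLocv G A a).erase y = eipLocv G (A.erase y) a := by
  ext v
  simp only [Finset.mem_erase, eip_mem_locv]
  tauto

lemma eip_w2_locv {G : SimpleGraph V} {A : Finset V} {a : V} (hw2 : W2In G A) (haA : a ∈ A) :
    W2In G (eipLocv G A a) ∧ alphaIn G (eipLocv G A a) + 1 = alphaIn G A := by
  obtain ⟨hwc, hrest⟩ := hw2
  obtain ⟨hwcD, halD⟩ := eip_wc_locv hwc haA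
  refine ⟨⟨hwcD, ?_⟩, halD⟩
  intro y hyD
  obtain ⟨hyA, hyadj, hya⟩ := eip_mem_locv.mp hyD
  obtain ⟨hwcAy, halAy⟩ := hrest y hyA
  have haAy : a ∈ A.erase y := Finset.mem_erase.mpr ⟨fun h => hya h.symm, haA⟩
  obtain ⟨hwc2, hal2⟩ := eip_wc_locv hwcAy haAy
  rw [← eip_locv_erase] at hwc2 hal2
  exact ⟨hwc2, by omega⟩

lemma eip_claimK {G : SimpleGraph V} {A : Finset V} {a : V} (hw2 : W2In G A) (haA : a ∈ A)
    {S : Finset V} (hSsub : S ⊆ eipLocv G A a) (hSind : IsIndep G S) :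
    ∃ b, b ∈ A ∧ G.Adj a b ∧ ∀ u ∈ S, ¬ G.Adj b u := by
  by_contra hcon
  push_neg at hcon
  obtain ⟨T, hST, hTsub, hTind, hTmax⟩ :=
    eip_exists_max (G := G) (A := eipLocv G A a) (eipLocv G A a).card S
      (Nat.sub_le _ _) hSsub hSind
  have hTmaxA : IsMaxIndepIn G (A.erase a) T := by
    refine ⟨fun v hv => ?_, hTind, fun v hvAe hvT hind2 => ?_⟩
    · obtain ⟨h1, h2, h3⟩ := eip_mem_locv.mp (hTsub hv)
      exact Finset.mem_erase.mpr ⟨h3, h1⟩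
    · obtain ⟨hva, hvA⟩ := Finset.mem_erase.mp hvAe
      by_cases hadj : G.Adj a v
      · obtain ⟨u, huS, hu⟩ := hcon v hvA hadj
        exact hind2 v (Finset.mem_insert_self v T) u (Finset.mem_insert_of_mem (hST huS)) hu
      · exact hTmax v (eip_mem_locv.mpr ⟨hvA, hadj, hva⟩) hvT hind2
  obtain ⟨hwcA, hrest⟩ := hw2
  obtain ⟨hwcAa, halAa⟩ := hrest a haA
  have hc1 : T.card = alphaIn G (A.erase a) := hwcAa T hTmaxA
  obtain ⟨_, halD⟩ := eip_wc_locv hwcA haA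
  have hc2 : T.card ≤ alphaIn G (eipLocv G A a) := eip_card_le_alpha hTsub hTind
  omega

open scoped Classical in
/-- The set of candidate neighbors of `a` usable in the toggle involution. -/
noncomputable def eipCand (G : SimpleGraph V) (A : Finset V) (a : V) (S : Finset V) : Finset V :=
  A.filter (fun b => G.Adj a b ∧ ∀ u ∈ S, ¬ G.Adj a u → ¬ G.Adj b u)

lemma eip_mem_cand {G : SimpleGraph V} {A S : Finset V} {a b : V} :
    b ∈ eipCand G A a S ↔ b ∈ A ∧ G.Adj a b ∧ ∀ u ∈ S, ¬ G.Adj a u → ¬ G.Adj b u := by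
  classical
  simp [eipCand]

lemma eip_cand_insert {G : SimpleGraph V} {A S : Finset V} {a b : V} (hab : G.Adj a b) :
    eipCand G A a (insert b S) = eipCand G A a S := by
  ext c
  rw [eip_mem_cand, eip_mem_cand]
  constructor
  · rintro ⟨h1, h2, h3⟩
    exact ⟨h1, h2, fun u hu => h3 u (Finset.mem_insert_of_mem hu)⟩
  · rintro ⟨h1, h2, h3⟩
    refine ⟨h1, h2, fun u hu hau => ?_⟩
    rcases Finset.mem_insert.mp hu with rfl | hu
    · exact absurd hab hau
    · exact h3 u hu hau

lemma eip_cand_erase {G : SimpleGraph V} {A S : Finset V} {a b : V} (hab : G.Adj a b) :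
    eipCand G A a (S.erase b) = eipCand G A a S := by
  ext c
  rw [eip_mem_cand, eip_mem_cand]
  constructor
  · rintro ⟨h1, h2, h3⟩
    refine ⟨h1, h2, fun u hu hau => ?_⟩
    rcases eq_or_ne u b with rfl | hub
    · exact absurd hab hau
    · exact h3 u (Finset.mem_erase.mpr ⟨hub, hu⟩) hau
  · rintro ⟨h1, h2, h3⟩
    exact ⟨h1, h2, fun u hu hau => h3 u (Finset.erase_subset _ _ hu) hau⟩

open scoped Classical in
/-- The toggle involution used to show `E(A \ a) = 0`. -/
noncomputable def eipTog (G : SimpleGraph V) (A : Finset V) (a : V) (S : Finset V) : Finset V :=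
  if h : (eipCand G A a S).Nonempty then
    (if eipPick h ∈ S then S.erase (eipPick h) else insert (eipPick h) S)
  else S

lemma eip_tog_eq {G : SimpleGraph V} {A S : Finset V} {a : V}
    (hne : (eipCand G A a S).Nonempty) :
    eipTog G A a S =
      if eipPick hne ∈ S then S.erase (eipPick hne) else insert (eipPick hne) S := by
  unfold eipTog
  rw [dif_pos hne]

lemma eip_erase_zero {G : SimpleGraph V} (htf : G.CliqueFree 3) {A : Finset V} {a : V}
    (hw2 : W2In G A) (haA : a ∈ A) : eipE G (A.erase a) = 0 := by
  classical
  have hcandne : ∀ S : Finset V, S ⊆ A.erase a → IsIndep G S → (eipCand G A a S).Nonempty := by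
    intro S hsub hind
    have h1 : S.filter (fun v => ¬ G.Adj a v) ⊆ eipLocv G A a := by
      intro v hv
      rw [Finset.mem_filter] at hv
      have hv' := Finset.mem_erase.mp (hsub hv.1)
      exact eip_mem_locv.mpr ⟨hv'.2, hv.2, hv'.1⟩
    obtain ⟨b, hbA, hadj, hb⟩ := eip_claimK hw2 haA h1
      (eip_indep_mono hind (Finset.filter_subset _ _))
    exact ⟨b, eip_mem_cand.mpr ⟨hbA, hadj,
      fun u hu hau => hb u (Finset.mem_filter.mpr ⟨hu, hau⟩)⟩⟩
  unfold eipE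
  refine Finset.sum_involution (fun S _ => eipTog G A a S) ?_ ?_ ?_ ?_
  -- first: the membership condition (g_mem) is the 4th arg... order: h, g_ne, g_mem, g_inv
  · -- f S + f (tog S) = 0
    intro S hS
    rw [Finset.mem_filter, Finset.mem_powerset] at hS
    obtain ⟨hsub, hind⟩ := hS
    have hne := hcandne S hsub hind
    beta_reduce
    rw [eip_tog_eq hne]
    by_cases hbS : eipPick hne ∈ S
    · rw [if_pos hbS]
      have hk := Finset.card_erase_add_one hbS
      rw [← hk, pow_succ]
      ring
    · rw [if_neg hbS, Finset.card_insert_of_notMem hbS, pow_succ]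
      ring
  · -- g_ne
    intro S hS _
    rw [Finset.mem_filter, Finset.mem_powerset] at hS
    obtain ⟨hsub, hind⟩ := hS
    have hne := hcandne S hsub hind
    beta_reduce
    rw [eip_tog_eq hne]
    by_cases hbS : eipPick hne ∈ S
    · rw [if_pos hbS]
      intro h
      have := congrArg Finset.card h
      have hk := Finset.card_erase_add_one hbS
      omega
    · rw [if_neg hbS]
      intro h
      have := congrArg Finset.card h
      have hk := Finset.card_insert_of_notMem hbS
      omega
  · -- g_mem
    intro S hS
    rw [Finset.mem_filter, Finset.mem_powerset] at hS
    obtain ⟨hsub, hind⟩ := hS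
    have hne := hcandne S hsub hind
    have hbmem := eipPick_mem hne
    rw [eip_mem_cand] at hbmem
    obtain ⟨hbA, hab, hbgood⟩ := hbmem
    set b := eipPick hne with hbdef
    beta_reduce
    have hnb : ∀ v ∈ S, ¬ G.Adj b v := by
      intro v hv
      by_cases hav : G.Adj a v
      · intro hbv
        have hclq : G.IsNClique 3 {a, b, v} :=
          SimpleGraph.is3Clique_iff.mpr ⟨a, b, v, hab, hav, hbv, rfl⟩
        exact htf _ hclq
      · exact hbgood v hv hav
    rw [eip_tog_eq hne, Finset.mem_filter, Finset.mem_powerset]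
    by_cases hbS : b ∈ S
    · rw [if_pos hbS]
      exact ⟨(Finset.erase_subset _ _).trans hsub,
        eip_indep_mono hind (Finset.erase_subset _ _)⟩
    · rw [if_neg hbS]
      constructor
      · refine Finset.insert_subset ?_ hsub
        exact Finset.mem_erase.mpr ⟨(G.ne_of_adj hab).symm, hbA⟩
      · exact eip_indep_insert hind hnb
  · -- g_inv
    intro S hS
    rw [Finset.mem_filter, Finset.mem_powerset] at hS
    obtain ⟨hsub, hind⟩ := hS
    have hne := hcandne S hsub hind
    have hbmem := eipPick_mem hne
    rw [eip_mem_cand] at hbmem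
    obtain ⟨hbA, hab, hbgood⟩ := hbmem
    set b := eipPick hne with hbdef
    beta_reduce
    rw [eip_tog_eq hne]
    by_cases hbS : b ∈ S
    · rw [if_pos hbS]
      have hc : eipCand G A a (S.erase b) = eipCand G A a S := eip_cand_erase hab
      have hne2 : (eipCand G A a (S.erase b)).Nonempty := by rw [hc]; exact hne
      rw [eip_tog_eq hne2]
      have hb2 : eipPick hne2 = b :=
        (eipPick_congr hc hne2 hne).trans hbdef.symm
      rw [hb2, if_neg (Finset.notMem_erase b S), Finset.insert_erase hbS]
    · rw [if_neg hbS]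
      have hc : eipCand G A a (insert b S) = eipCand G A a S := eip_cand_insert hab
      have hne2 : (eipCand G A a (insert b S)).Nonempty := by rw [hc]; exact hne
      rw [eip_tog_eq hne2]
      have hb2 : eipPick hne2 = b :=
        (eipPick_congr hc hne2 hne).trans hbdef.symm
      rw [hb2, if_pos (Finset.mem_insert_self b S), Finset.erase_insert hbS]

lemma eip_split {G : SimpleGraph V} {A : Finset V} {a : V} (haA : a ∈ A) :
    eipE G A = eipE G (A.erase a) - eipE G (eipLocv G A a) := by
  classical
  unfold eipE
  have hsplit := Finset.sum_filter_add_sum_filter_not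
    ((A.powerset).filter (fun S => IsIndep G S)) (fun S => a ∈ S) (fun S => (-1 : ℤ) ^ S.card)
  have h2 : (((A.powerset).filter (fun S => IsIndep G S)).filter (fun S => ¬ a ∈ S)) =
      ((A.erase a).powerset).filter (fun S => IsIndep G S) := by
    ext S
    simp only [Finset.mem_filter, Finset.mem_powerset, Finset.subset_erase]
    tauto
  have h3 : ∑ S ∈ (((A.powerset).filter (fun S => IsIndep G S)).filter (fun S => a ∈ S)),
      (-1 : ℤ) ^ S.card
      = ∑ T ∈ ((eipLocv G A a).powerset).filter (fun S => IsIndep G S), -((-1 : ℤ) ^ T.card) := by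
    refine Finset.sum_bij' (fun S _ => S.erase a) (fun T _ => insert a T) ?_ ?_ ?_ ?_ ?_
    · intro S hS
      rw [Finset.mem_filter, Finset.mem_filter, Finset.mem_powerset] at hS
      obtain ⟨⟨hsub, hind⟩, haS⟩ := hS
      rw [Finset.mem_filter, Finset.mem_powerset]
      constructor
      · intro v hv
        obtain ⟨hva, hvS⟩ := Finset.mem_erase.mp hv
        exact eip_mem_locv.mpr ⟨hsub hvS, hind a haS v hvS, hva⟩
      · exact eip_indep_mono hind (Finset.erase_subset _ _)
    · intro T hT
      rw [Finset.mem_filter, Finset.mem_powerset] at hT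
      obtain ⟨hsub, hind⟩ := hT
      have hmem : ∀ v ∈ T, v ∈ A ∧ ¬ G.Adj a v ∧ v ≠ a := fun v hv => eip_mem_locv.mp (hsub hv)
      rw [Finset.mem_filter, Finset.mem_filter, Finset.mem_powerset]
      exact ⟨⟨Finset.insert_subset haA (fun v hv => (hmem v hv).1),
        eip_indep_insert hind (fun v hv => (hmem v hv).2.1)⟩,
        Finset.mem_insert_self a T⟩
    · intro S hS
      rw [Finset.mem_filter] at hS
      exact Finset.insert_erase hS.2
    · intro T hT
      rw [Finset.mem_filter, Finset.mem_powerset] at hT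
      have haT : a ∉ T := fun h => (eip_mem_locv.mp (hT.1 h)).2.2 rfl
      exact Finset.erase_insert haT
    · intro S hS
      rw [Finset.mem_filter] at hS
      have hk := Finset.card_erase_add_one hS.2
      rw [← hk, pow_succ]
      ring
  rw [Finset.sum_neg_distrib] at h3
  rw [← hsplit, h2, h3]
  ring

lemma eip_E_empty (G : SimpleGraph V) : eipE G (∅ : Finset V) = 1 := by
  classical
  unfold eipE
  rw [Finset.powerset_empty, Finset.filter_singleton, if_pos (eip_indep_empty G)]
  simp

lemma eip_alpha_empty (G : SimpleGraph V) : alphaIn G (∅ : Finset V) = 0 := by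
  classical
  unfold alphaIn
  rw [Finset.powerset_empty, Finset.filter_singleton, if_pos (eip_indep_empty G)]
  simp

lemma eip_main {G : SimpleGraph V} (htf : G.CliqueFree 3) :
    ∀ A : Finset V, W2In G A → eipE G A = (-1 : ℤ) ^ (alphaIn G A) := by
  intro A
  induction A using Finset.strongInduction with
  | H A ih =>
    intro hw2
    rcases Finset.eq_empty_or_nonempty A with rfl | ⟨a, haA⟩
    · rw [eip_E_empty, eip_alpha_empty, pow_zero]
    · obtain ⟨hw2D, halD⟩ := eip_w2_locv hw2 haA
      have hsubD : eipLocv G A a ⊆ A := fun v hv => (eip_mem_locv.mp hv).1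
      have hss : eipLocv G A a ⊂ A :=
        (Finset.ssubset_iff_of_subset hsubD).mpr
          ⟨a, haA, fun h => (eip_mem_locv.mp h).2.2 rfl⟩
      have hIH := ih _ hss hw2D
      rw [eip_split haA, eip_erase_zero htf hw2 haA, hIH, ← halD, pow_succ]
      ring

lemma eip_loc_empty (G : SimpleGraph V) : loc G (∅ : Finset V) = Finset.univ := by
  classical
  unfold loc nbrSet
  simp

lemma eip_mem_loc {G : SimpleGraph V} {F : Finset V} {v : V} :
    v ∈ loc G F ↔ v ∉ F ∧ ∀ u ∈ F, ¬ G.Adj u v := by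
  classical
  unfold loc nbrSet
  simp only [Finset.mem_sdiff, Finset.mem_univ, true_and, Finset.mem_union, Finset.mem_filter,
    not_or, not_and, not_exists]
  tauto

lemma eip_loc_insert {G : SimpleGraph V} {F : Finset V} {a : V} (haF : a ∉ F) :
    loc G (insert a F) = eipLocv G (loc G F) a := by
  ext v
  rw [eip_mem_locv, eip_mem_loc, eip_mem_loc]
  constructor
  · rintro ⟨h1, h2⟩
    have hva : v ≠ a := fun h => h1 (h ▸ Finset.mem_insert_self a F)
    refine ⟨⟨fun h => h1 (Finset.mem_insert_of_mem h),
      fun u hu => h2 u (Finset.mem_insert_of_mem hu)⟩, ?_, hva⟩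
    exact h2 a (Finset.mem_insert_self a F)
  · rintro ⟨⟨h1, h2⟩, h3, h4⟩
    constructor
    · intro h
      rcases Finset.mem_insert.mp h with rfl | h
      · exact h4 rfl
      · exact h1 h
    · intro u hu
      rcases Finset.mem_insert.mp hu with rfl | hu
      · exact h3
      · exact h2 u hu

lemma eip_mem_loc_self {G : SimpleGraph V} {F : Finset V} {a : V} (haF : a ∉ F)
    (hind : IsIndep G (insert a F)) : a ∈ loc G F := by
  rw [eip_mem_loc]
  exact ⟨haF, fun u hu =>
    hind u (Finset.mem_insert_of_mem hu) a (Finset.mem_insert_self a F)⟩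

lemma eip_w2_loc {G : SimpleGraph V} (hw2 : W2In G Finset.univ) :
    ∀ F : Finset V, IsIndep G F → W2In G (loc G F) := by
  intro F
  induction F using Finset.strongInduction with
  | H F ih =>
    intro hind
    rcases Finset.eq_empty_or_nonempty F with rfl | ⟨a, haF⟩
    · rw [eip_loc_empty]; exact hw2
    · have hmem : a ∉ F.erase a := Finset.notMem_erase a F
      have hFa : insert a (F.erase a) = F := Finset.insert_erase haF
      have hinds : IsIndep G (insert a (F.erase a)) := by rw [hFa]; exact hind
      have hindF' : IsIndep G (F.erase a) := eip_indep_mono hind (Finset.erase_subset a F)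
      have hW2' := ih (F.erase a) (Finset.erase_ssubset haF) hindF'
      have haloc : a ∈ loc G (F.erase a) := eip_mem_loc_self hmem hinds
      rw [← hFa, eip_loc_insert hmem]
      exact (eip_w2_locv hW2' haloc).1

end EIPAux

section EdgeIdealPaper

variable {V : Type*} [Fintype V] [DecidableEq V]

/-- If `G` is a triangle-free graph in `W₂`, then its independence complex is
Eulerian: it is pure, and for every face `F` (i.e. every independent set) the
reduced Euler characteristic of the link of `F` equals `(-1)^{dim lk F}`,
that is, `-(-1)^{α(G_F)}`. -/
theorem stmt8 (G : SimpleGraph V) (htf : G.CliqueFree 3)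
    (hw2 : W2In G Finset.univ) :
    WellCoveredIn G Finset.univ ∧
      ∀ F : Finset V, IsIndep G F →
        indEuler G (loc G F) = -(-1 : ℤ) ^ alphaIn G (loc G F) := by
  refine ⟨hw2.1, fun F hF => ?_⟩
  have hW2F := eip_w2_loc hw2 F hF
  rw [eip_indEuler, eip_main htf (loc G F) hW2F]

end EdgeIdealPaper
end
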